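/- Distributed spanning-tree certification is sound: let G be a connected graph, and suppose every vertex v is assigned a value root(v) and a natural number d(v), and a pointer p(v) (with p(v) = ⊥ for at most the vertices with d(v) = 0), such that for every edge {u,v}, root(u) = root(v), and for every vertex v with d(v) > 0, p(v) is a neighbor of v with d(p(v)) = d(v) - 1. Then the set of edges {v, p(v)} over vertices with d(v) > 0 contains no cycle, and every vertex reaches a vertex of d-value 0 by iterating p; if moreover exactly one vertex has d(v) = 0, these edges form a spanning tree of G. -/

import Mathlib

/-- **Soundness of distributed spanning-tree certification.** Let `G` be a connected graph
whose vertices carry certificates: a root identifier `root v`, a distance value `d v`, and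
a parent pointer `p v` (meaningful only when `d v > 0`). Suppose the certificates pass the
local tests: endpoints of every edge agree on the root identifier, and every vertex `v`
with `d v > 0` has `p v` as a neighbor with `d (p v) = d v - 1`. Then the set of edges
`{v, p v}` over vertices with `d v > 0` contains no cycle, every vertex reaches a vertex
of `d`-value `0` by iterating `p`, and if moreover exactly one vertex has `d`-value `0`,
these edges form a spanning tree of `G`. -/
theorem spanning_tree_certification_sound {V : Type} [Fintype V] [DecidableEq V]
    (G : SimpleGraph V) (hG : G.Connected)
    (root : V → ℕ) (d : V → ℕ) (p : V → V)
    (hroot : ∀ u v : V, G.Adj u v → root u = root v)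
    (hp : ∀ v : V, 0 < d v → G.Adj v (p v) ∧ d (p v) = d v - 1) :
    (SimpleGraph.fromRel fun a b => (0 < d a ∧ p a = b) ∨ (0 < d b ∧ p b = a)).IsAcyclic ∧
    (∀ v : V, ∃ m : ℕ, d (p^[m] v) = 0) ∧
    ((∃! v : V, d v = 0) →
      (SimpleGraph.fromRel fun a b => (0 < d a ∧ p a = b) ∨ (0 < d b ∧ p b = a)) ≤ G ∧
      (SimpleGraph.fromRel fun a b => (0 < d a ∧ p a = b) ∨ (0 < d b ∧ p b = a)).IsTree) := by
  set T : SimpleGraph V :=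
    SimpleGraph.fromRel fun a b => (0 < d a ∧ p a = b) ∨ (0 < d b ∧ p b = a) with hT
  -- basic characterization of T-adjacency
  have hTadj : ∀ a b : V, T.Adj a b → (0 < d a ∧ p a = b) ∨ (0 < d b ∧ p b = a) := by
    intro a b hab
    rw [hT, SimpleGraph.fromRel_adj] at hab
    tauto
  -- adjacency to a vertex of maximal d forces parent
  have hB : ∀ u x : V, T.Adj u x → d x ≤ d u → p u = x := by
    intro u x hux hle
    rcases hTadj u x hux with ⟨_, h⟩ | ⟨hx, h⟩
    · exact h
    · have h2 := (hp x hx).2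
      rw [h] at h2
      omega
  -- reaching a zero vertex
  have key : ∀ n : ℕ, ∀ v : V, d v ≤ n → ∃ m : ℕ, d (p^[m] v) = 0 := by
    intro n
    induction n with
    | zero => intro v h; exact ⟨0, Nat.le_zero.mp h⟩
    | succ n ih =>
      intro v h
      rcases Nat.eq_zero_or_pos (d v) with h0 | h0
      · exact ⟨0, h0⟩
      · have hd := (hp v h0).2
        obtain ⟨m, hm⟩ := ih (p v) (by omega)
        exact ⟨m + 1, by rwa [Function.iterate_succ_apply]⟩
  -- acyclicity
  have acyc : T.IsAcyclic := by
    intro v c hc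
    -- pick a vertex of maximal d on the cycle
    have hsupp : (c.support.toFinset : Finset V).Nonempty := by
      simp [List.toFinset_nonempty_iff, c.support_ne_nil]
    obtain ⟨u, hu, hmax⟩ := Finset.exists_max_image c.support.toFinset d hsupp
    rw [List.mem_toFinset] at hu
    have hmax' : ∀ w ∈ c.support, d w ≤ d u := fun w hw =>
      hmax w (List.mem_toFinset.mpr hw)
    -- rotate the cycle to start at u
    set c' : T.Walk u u := c.rotate u hu with hc'
    have hcyc : c'.IsCycle := hc.rotate hu
    have hsub : ∀ w ∈ c'.support, d w ≤ d u := by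
      intro w hw
      rw [SimpleGraph.Walk.mem_support_iff] at hw
      rcases hw with rfl | hw
      · exact le_refl _
      · have hperm := SimpleGraph.Walk.support_rotate c u hu
        have : w ∈ c.support.tail := hperm.mem_iff.mp hw
        exact hmax' w (List.mem_of_mem_tail this)
    clear_value c'
    -- destructure the cycle
    cases c' with
    | nil => exact hcyc.ne_nil rfl
    | cons hadj q =>
      rename_i b
      -- the last edge of q
      have hqlen : 0 < q.length := by
        have := hcyc.three_le_length
        simp [SimpleGraph.Walk.length_cons] at this
        omega
      have hqrev : ¬ q.reverse.Nil := by
        rw [SimpleGraph.Walk.nil_iff_length_eq]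
        simp only [SimpleGraph.Walk.length_reverse]; omega
      cases hqr : q.reverse with
      | nil => rw [hqr] at hqrev; exact hqrev SimpleGraph.Walk.Nil.nil
      | cons hadj2 q2 =>
        rename_i a
        -- hadj2 : T.Adj u a
        have haq : s(u, a) ∈ q.edges := by
          have : s(u, a) ∈ q.reverse.edges := by
            rw [hqr]; simp
          rwa [SimpleGraph.Walk.edges_reverse, List.mem_reverse] at this
        have hamem : a ∈ q.support := by
          have : a ∈ q.reverse.support := by
            rw [hqr]
            exact List.mem_cons_of_mem _ q2.start_mem_support
          rwa [SimpleGraph.Walk.support_reverse, List.mem_reverse] at this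
        have hbmem : b ∈ q.support := q.start_mem_support
        have hdb : d b ≤ d u := hsub b (by
          rw [SimpleGraph.Walk.support_cons]
          exact List.mem_cons_of_mem _ hbmem)
        have hda : d a ≤ d u := hsub a (by
          rw [SimpleGraph.Walk.support_cons]
          exact List.mem_cons_of_mem _ hamem)
        have hb : p u = b := hB u b hadj hdb
        have ha : p u = a := hB u a hadj2 hda
        -- a ≠ b since edges of a cycle are nodup
        have hnodup := hcyc.edges_nodup
        rw [SimpleGraph.Walk.edges_cons, List.nodup_cons] at hnodup
        have hab : b = a := by rw [← hb, ha]
        rw [← hab] at haq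
        exact hnodup.1 haq
  refine ⟨acyc, fun v => key (d v) v le_rfl, ?_⟩
  rintro ⟨r, hr, hru⟩
  have hle : T ≤ G := by
    intro a b hab
    rcases hTadj a b hab with ⟨ha, hb⟩ | ⟨ha, hb⟩
    · rw [← hb]; exact (hp a ha).1
    · rw [← hb]; exact ((hp b ha).1).symm
  have reach : ∀ n : ℕ, ∀ v : V, d v ≤ n → T.Reachable v r := by
    intro n
    induction n with
    | zero =>
      intro v h
      rw [hru v (Nat.le_zero.mp h)]
    | succ n ih =>
      intro v h
      rcases Nat.eq_zero_or_pos (d v) with h0 | h0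
      · rw [hru v h0]
      · have hd := (hp v h0).2
        have hadj : T.Adj v (p v) := by
          rw [hT, SimpleGraph.fromRel_adj]
          exact ⟨(hp v h0).1.ne, Or.inl (Or.inl ⟨h0, rfl⟩)⟩
        exact hadj.reachable.trans (ih (p v) (by omega))
  have hconn : T.Connected := by
    rw [SimpleGraph.connected_iff]
    refine ⟨fun a b => (reach (d a) a le_rfl).trans (reach (d b) b le_rfl).symm,
      hG.nonempty⟩
  exact ⟨hle, ⟨hconn, acyc⟩⟩
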